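/- For tuples ā ∈ A and b̄ ∈ B of the same length and α ≥ 1, the back-and-forth relation (A,ā) ≤_α (B,b̄) holds if and only if every infinitary Π^in_α formula true of ā in A is true of b̄ in B. -/

import Mathlib

attribute [local instance] Classical.propDecidable

noncomputable section

/-! ## Basic oracle computability on Cantor space -/

abbrev Cantor := ℕ → Bool

/-- Kleene-style partial recursion relative to an oracle `O`. -/
inductive RecursiveInO (O : ℕ →. ℕ) : (ℕ →. ℕ) → Prop
  | oracle : RecursiveInO O O
  | zero : RecursiveInO O (pure 0)
  | succ : RecursiveInO O Nat.succ
  | left : RecursiveInO O ↑fun n : ℕ => n.unpair.1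
  | right : RecursiveInO O ↑fun n : ℕ => n.unpair.2
  | pair {f g} : RecursiveInO O f → RecursiveInO O g →
      RecursiveInO O fun n => Nat.pair <$> f n <*> g n
  | comp {f g} : RecursiveInO O f → RecursiveInO O g →
      RecursiveInO O fun n => g n >>= f
  | prec {f g} : RecursiveInO O f → RecursiveInO O g →
      RecursiveInO O (Nat.unpaired fun a n =>
        n.rec (f a) fun y IH => do let i ← IH; g (Nat.pair a (Nat.pair y i)))
  | rfind {f} : RecursiveInO O f →
      RecursiveInO O fun a => Nat.rfind fun n => (fun m => m = 0) <$> f (Nat.pair a n)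

def asOracle (X : Cantor) : ℕ →. ℕ := fun n => Part.some (cond (X n) 1 0)

/-- `TRed X Y` : `X` is Turing reducible to `Y` (`X ≤_T Y`). -/
def TRed (X Y : Cantor) : Prop := RecursiveInO (asOracle Y) (asOracle X)

/-- Turing equivalence. -/
def TEquiv (X Y : Cantor) : Prop := TRed X Y ∧ TRed Y X

/-- Turing join `X ⊕ Y`. -/
def joinC (X Y : Cantor) : Cantor := fun n => if n % 2 = 0 then X (n / 2) else Y (n / 2)

def evens (Z : Cantor) : Cantor := fun n => Z (2 * n)
def odds (Z : Cantor) : Cantor := fun n => Z (2 * n + 1)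

/-- `X` is (outright) computable. -/
def ComputableC (X : Cantor) : Prop := TRed X fun _ => false

/-! ## Ordinals computable in an oracle; `ω₁^X` -/

/-- The strict order relation on the field coded by `r` (as a set of codes of pairs). -/
def relOf (r : Cantor) :
    {n : ℕ // r (Nat.pair n n) = true} → {n : ℕ // r (Nat.pair n n) = true} → Prop :=
  fun a b => r (Nat.pair a.1 b.1) = true ∧ a.1 ≠ b.1

/-- `r` codes a well-ordering of order type `α`. -/
def CodesOrdinal (r : Cantor) (α : Ordinal) : Prop :=
  ∃ h : IsWellOrder _ (relOf r), @Ordinal.type _ (relOf r) h = α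

/-- `ω₁^X`: the least ordinal with no `X`-computable copy. -/
def omega1C (X : Cantor) : Ordinal :=
  sInf {α : Ordinal | ¬ ∃ r : Cantor, TRed r X ∧ CodesOrdinal r α}

/-- `α` is admissible: of the form `ω₁^X`. -/
def AdmissibleOrd (α : Ordinal) : Prop := ∃ X : Cantor, omega1C X = α

/-! ## Projective sets and projective determinacy -/

/-- Projective subsets of Cantor space. -/
inductive ProjectiveSet : Set Cantor → Prop
  | borel {s : Set Cantor} : MeasurableSet s → ProjectiveSet s
  | compl {s} : ProjectiveSet s → ProjectiveSet sᶜ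
  | proj {s} : ProjectiveSet s → ProjectiveSet {X | ∃ Y : Cantor, joinC X Y ∈ s}

/-- A function `2^ω → 2^ω` is projective if its graph is. -/
def ProjFun (g : Cantor → Cantor) : Prop := ProjectiveSet {Z | odds Z = g (evens Z)}

/-- History of a play of the Gale–Stewart game where I follows `σ`, II follows `τ`. -/
def histAux (σ τ : List Bool → Bool) : ℕ → List Bool
  | 0 => []
  | n + 1 => histAux σ τ n ++ [if n % 2 = 0 then σ (histAux σ τ n) else τ (histAux σ τ n)]

/-- The infinite play produced by strategies `σ` (player I) and `τ` (player II). -/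
def play (σ τ : List Bool → Bool) : Cantor :=
  fun n => if n % 2 = 0 then σ (histAux σ τ n) else τ (histAux σ τ n)

/-- The game with payoff `A` is determined. -/
def DeterminedG (A : Set Cantor) : Prop :=
  (∃ σ, ∀ τ, play σ τ ∈ A) ∨ (∃ τ, ∀ σ, play σ τ ∉ A)

/-- Projective determinacy. -/
def PD : Prop := ∀ A : Set Cantor, ProjectiveSet A → DeterminedG A

/-! ## Trees on `2^{<ω}` -/

def seg (Y : Cantor) (n : ℕ) : List Bool := (List.range n).map Y

def IsTree (P : List Bool → Bool) : Prop :=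
  P [] = true ∧ ∀ σ b, P (σ ++ [b]) = true → P σ = true

def IsPathT (P : List Bool → Bool) (Y : Cantor) : Prop := ∀ n, P (seg Y n) = true

def IsSplit (P : List Bool → Bool) (σ : List Bool) : Prop :=
  P (σ ++ [false]) = true ∧ P (σ ++ [true]) = true

def PerfectT (P : List Bool → Bool) : Prop :=
  ∀ σ, P σ = true → ∃ τ, σ <+: τ ∧ IsSplit P τ

def PrunedT (P : List Bool → Bool) : Prop :=
  ∀ σ, P σ = true → P (σ ++ [false]) = true ∨ P (σ ++ [true]) = true

/-- The tree as an element of Cantor space (via coding of finite strings). -/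
def treeSet (P : List Bool → Bool) : Cantor := fun n =>
  match (Encodable.decode n : Option (List Bool)) with
  | some σ => P σ
  | none => false

/-- A perfect (pruned) tree all of whose paths compute it. -/
def PointedT (P : List Bool → Bool) : Prop :=
  IsTree P ∧ PrunedT P ∧ PerfectT P ∧ ∀ Y, IsPathT P Y → TRed (treeSet P) Y

/-- Number of splitting levels of `P` along `Y` below `k`. -/
def splitsBelow (P : List Bool → Bool) (Y : Cantor) (k : ℕ) : ℕ :=
  ((List.range k).filter fun j => decide (IsSplit P (seg Y j))).length

/-- `Y` is the path of `P` obtained by following `X` at every split of `P`. -/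
def FollowsT (P : List Bool → Bool) (X Y : Cantor) : Prop :=
  IsPathT P Y ∧ (∀ n, ∃ k, n ≤ k ∧ IsSplit P (seg Y k)) ∧
    ∀ k, IsSplit P (seg Y k) → Y k = X (splitsBelow P Y k)

/-! ## Countable structures and infinitary logic -/

/-- A structure on domain `ℕ` in the relational language whose `i`-th symbol has arity `ar i`. -/
def Str (ar : ℕ → ℕ) := (i : ℕ) → (Fin (ar i) → ℕ) → Prop

/-- `L_{ω₁,ω}` formulas (variables indexed by `ℕ`, countable conjunctions). -/
inductive IForm (ar : ℕ → ℕ) : Type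
  | atom (i : ℕ) (v : Fin (ar i) → ℕ)
  | eq (x y : ℕ)
  | not (φ : IForm ar)
  | conj (φs : ℕ → IForm ar)
  | all (x : ℕ) (φ : IForm ar)

variable {ar : ℕ → ℕ}

def Sat (A : Str ar) : (ℕ → ℕ) → IForm ar → Prop
  | s, .atom i v => A i fun j => s (v j)
  | s, .eq x y => s x = s y
  | s, .not φ => ¬ Sat A s φ
  | s, .conj φs => ∀ n, Sat A s (φs n)
  | s, .all x φ => ∀ a : ℕ, Sat A (Function.update s x a) φ

def freeVars : IForm ar → Set ℕ
  | .atom _ v => Set.range v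
  | .eq x y => {x, y}
  | .not φ => freeVars φ
  | .conj φs => ⋃ n, freeVars (φs n)
  | .all x φ => freeVars φ \ {x}

/-- A sentence: no free variables. -/
def SentenceF (φ : IForm ar) : Prop := freeVars φ = ∅

/-- Satisfaction of a sentence. -/
def SatS (A : Str ar) (φ : IForm ar) : Prop := Sat A (fun _ => 0) φ

def IForm.disj (φs : ℕ → IForm ar) : IForm ar := .not (.conj fun n => .not (φs n))
def IForm.ex (x : ℕ) (φ : IForm ar) : IForm ar := .not (.all x (.not φ))
def IForm.exs (l : List ℕ) (φ : IForm ar) : IForm ar := l.foldr IForm.ex φ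
def IForm.alls (l : List ℕ) (φ : IForm ar) : IForm ar := l.foldr IForm.all φ
def IForm.and (φ ψ : IForm ar) : IForm ar := .conj fun n => if n = 0 then φ else ψ

/-- Finitary quantifier-free formulas. -/
inductive QFree : IForm ar → Prop
  | atom {i v} : QFree (.atom i v)
  | eq {x y} : QFree (.eq x y)
  | not {φ} : QFree φ → QFree (.not φ)
  | and {φ ψ} : QFree φ → QFree ψ → QFree (φ.and ψ)

mutual
/-- `Σ^in_α` formulas. -/
inductive IsSig : Ordinal.{0} → IForm ar → Prop
  | qf {α : Ordinal} {φ : IForm ar} : QFree φ → IsSig α φ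
  | comp {α : Ordinal} (β : ℕ → Ordinal) (vs : ℕ → List ℕ) (φs : ℕ → IForm ar) :
      (∀ n, β n < α) → (∀ n, IsPi (β n) (φs n)) →
      IsSig α (IForm.disj fun n => IForm.exs (vs n) (φs n))
/-- `Π^in_α` formulas. -/
inductive IsPi : Ordinal.{0} → IForm ar → Prop
  | qf {α : Ordinal} {φ : IForm ar} : QFree φ → IsPi α φ
  | comp {α : Ordinal} (β : ℕ → Ordinal) (vs : ℕ → List ℕ) (φs : ℕ → IForm ar) :
      (∀ n, β n < α) → (∀ n, IsSig (β n) (φs n)) →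
      IsPi α (.conj fun n => IForm.alls (vs n) (φs n))
end

/-- `Σ^in_α`-elementary equivalence (`A ≡_α B`). -/
def SigEquiv (α : Ordinal) (A B : Str ar) : Prop :=
  ∀ φ : IForm ar, IsSig α φ → SentenceF φ → (SatS A φ ↔ SatS B φ)

/-- The assignment sending variable `i` to the `i`-th entry of the tuple `a`. -/
def asn (a : List ℕ) : ℕ → ℕ := fun i => a.getD i 0

/-- Every `Π^in_α` formula (with free variables among the tuple) true of `ā` in `A`
is true of `b̄` in `B`. -/
def PiTypeSub (α : Ordinal) (A : Str ar) (a : List ℕ) (B : Str ar) (b : List ℕ) : Prop :=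
  ∀ φ : IForm ar, IsPi α φ → freeVars φ ⊆ Set.Iio a.length →
    Sat A (asn a) φ → Sat B (asn b) φ

/-! ## Back-and-forth relations -/

/-- `ā` and `b̄` satisfy the same atomic formulas among the first `|ā|` symbols. -/
def atomEquiv (A : Str ar) (a : List ℕ) (B : Str ar) (b : List ℕ) : Prop :=
  a.length = b.length ∧
  (∀ p q, p < a.length → q < a.length →
    (a.getD p 0 = a.getD q 0 ↔ b.getD p 0 = b.getD q 0)) ∧
  (∀ i, i < a.length → ∀ v : Fin (ar i) → ℕ, (∀ j, v j < a.length) →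
    (A i (fun j => a.getD (v j) 0) ↔ B i fun j => b.getD (v j) 0))

/-- The `α`-back-and-forth relations `(A,ā) ≤_α (B,b̄)`. -/
def BFLe (α : Ordinal.{0}) (A : Str ar) (a : List ℕ) (B : Str ar) (b : List ℕ) : Prop :=
  if α = 0 then atomEquiv A a B b
  else ∀ (d : List ℕ) (γ : Ordinal.{0}) (hγ : γ < α),
    ∃ c : List ℕ, c.length = d.length ∧ BFLe γ B (b ++ d) A (a ++ c)
termination_by α
decreasing_by exact hγ

/-- `(A,ā) ≡_α (B,b̄)`. -/
def BFEq (α : Ordinal) (A : Str ar) (a : List ℕ) (B : Str ar) (b : List ℕ) : Prop :=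
  BFLe α A a B b ∧ BFLe α B b A a

/-- `(C,c̄)` belongs to `ext_β(A,ā)`: it is `≤_β` some `(A, ād̄)`. -/
def ExtMem (β : Ordinal) (C : Str ar) (c : List ℕ) (A : Str ar) (a : List ℕ) : Prop :=
  ∃ d : List ℕ, c.length = a.length + d.length ∧ BFLe β C c A (a ++ d)

/-- Re-arrangement `π_ι` of a tuple. -/
def projT (ι : List ℕ) (a : List ℕ) : List ℕ := ι.map fun j => a.getD j 0

/-! ## Isomorphism, diagrams, copies, spectra, Scott rank -/

def IsoStr (A B : Str ar) : Prop :=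
  ∃ e : ℕ ≃ ℕ, ∀ i v, A i v ↔ B i fun j => e (v j)

/-- `D` is (the characteristic function of) the atomic diagram of `B`. -/
def DiagOf (B : Str ar) (D : Cantor) : Prop :=
  ∀ i (v : Fin (ar i) → ℕ),
    (B i v ↔ D (Nat.pair i (Encodable.encode (List.ofFn v))) = true)

/-- `X` computes a copy of `A`. -/
def ComputesCopy (X : Cantor) (A : Str ar) : Prop :=
  ∃ B D, IsoStr A B ∧ DiagOf B D ∧ TRed D X

/-- `ω₁^A = min{ω₁^X : X computes a copy of A}`. -/
def omega1Str (A : Str ar) : Ordinal :=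
  sInf {β : Ordinal | ∃ X, ComputesCopy X A ∧ omega1C X = β}

/-- `ω₁^{A,Y} = min{ω₁^X : X ≥_T Y, X computes a copy of A}`. -/
def omega1StrRel (A : Str ar) (Y : Cantor) : Ordinal :=
  sInf {β : Ordinal | ∃ X, TRed Y X ∧ ComputesCopy X A ∧ omega1C X = β}

/-- The two tuples satisfy the same `L_{ω₁,ω}` formulas in `A`. -/
def AllTypeEq (A : Str ar) (a b : List ℕ) : Prop :=
  ∀ φ : IForm ar, freeVars φ ⊆ Set.Iio a.length → (Sat A (asn a) φ ↔ Sat A (asn b) φ)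

/-- `ρ_A(ā)`: least `α` such that the `Π^in_α` type of `ā` determines its full type. -/
def rhoSR (A : Str ar) (a : List ℕ) : Ordinal :=
  sInf {α : Ordinal | ∀ b : List ℕ, b.length = a.length →
    PiTypeSub α A a A b → AllTypeEq A a b}

/-- Scott rank. -/
def SR (A : Str ar) : Ordinal := ⨆ a : List ℕ, rhoSR A a + 1

/-! ## Counting models -/

def CountablyManyModels (T : IForm ar) : Prop :=
  ∃ S : Set (Str ar), S.Countable ∧ ∀ A, SatS A T → ∃ B ∈ S, IsoStr A B

/-- `T` is scattered: countably many `≡_α`-classes of models for each `α < ω₁`. -/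
def ScatteredT (T : IForm ar) : Prop :=
  ∀ α : Ordinal, α < (Cardinal.aleph 1).ord →
    ∃ S : Set (Str ar), S.Countable ∧ ∀ A, SatS A T → ∃ B ∈ S, SatS B T ∧ SigEquiv α A B

/-- Counterexample to Vaught's conjecture. -/
def CexVC (T : IForm ar) : Prop := ScatteredT T ∧ ¬ CountablyManyModels T

/-- `T` has exactly `ℵ₁` many models up to isomorphism. -/
def Aleph1ManyModels (T : IForm ar) : Prop :=
  Cardinal.mk (Quot fun A B : {M : Str ar // SatS M T} => IsoStr A.1 B.1) = Cardinal.aleph 1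

/-- Minimal counterexample to Vaught's conjecture. -/
def MinimalCex (T : IForm ar) : Prop :=
  Aleph1ManyModels T ∧ ScatteredT T ∧
    ∀ φ : IForm ar, SentenceF φ →
      CountablyManyModels (T.and φ) ∨ CountablyManyModels (T.and φ.not)

/-! ## Computable infinitary formulas -/

/-- `FCodes ar c φ`: `c` is a code of the computable infinitary formula `φ`. -/
inductive FCodes (ar : ℕ → ℕ) : ℕ → IForm ar → Prop
  | atom (i : ℕ) (v : Fin (ar i) → ℕ) :
      FCodes ar (Nat.pair 0 (Nat.pair i (Encodable.encode (List.ofFn fun j => v j)))) (.atom i v)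
  | eq (x y : ℕ) : FCodes ar (Nat.pair 1 (Nat.pair x y)) (.eq x y)
  | not {c φ} : FCodes ar c φ → FCodes ar (Nat.pair 2 c) (.not φ)
  | all {c φ} (x : ℕ) : FCodes ar c φ → FCodes ar (Nat.pair 3 (Nat.pair x c)) (.all x φ)
  | conj (c : Nat.Partrec.Code) (g : ℕ → ℕ) (φs : ℕ → IForm ar) :
      (∀ n, g n ∈ c.eval n) → (∀ n, FCodes ar (g n) (φs n)) →
      FCodes ar (Nat.pair 4 (Encodable.encode c)) (.conj φs)

/-- A computable infinitary (`L^c_{ω₁,ω}`) formula. -/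
def ComputableForm (φ : IForm ar) : Prop := ∃ c, FCodes ar c φ

/-! ## Finite diagrams -/

/-- `m` codes an atomic fact (among the first `|ā|` symbols) true of `ā` in `A`. -/
def FinDiagMem (A : Str ar) (a : List ℕ) (m : ℕ) : Prop :=
  ∃ (i : ℕ) (l : List ℕ), m = Nat.pair i (Encodable.encode l) ∧ i < a.length ∧
    l.length = ar i ∧ (∀ j ∈ l, j < a.length) ∧ A i fun j => a.getD (l.getD (j : ℕ) 0) 0

def tuplesBelow (k : ℕ) : ℕ → List (List ℕ)
  | 0 => [[]]
  | n + 1 => (List.range k).flatMap fun x => (tuplesBelow k n).map fun l => x :: l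

def atomCodes (ar : ℕ → ℕ) (k : ℕ) : List ℕ :=
  (List.range k).flatMap fun i => (tuplesBelow k (ar i)).map fun l => Nat.pair i (Encodable.encode l)

/-- A number coding the atomic diagram `D_A(ā)` of the tuple `ā` in `A`
(over the first `|ā|` symbols of the language). -/
def diagCode (A : Str ar) (a : List ℕ) : ℕ :=
  Nat.pair a.length <| Encodable.encode <|
    (atomCodes ar a.length).filter fun m => decide (FinDiagMem A a m)

/-- A computably enumerable set of naturals. -/
def CEset (S : Set ℕ) : Prop := ∃ c : Nat.Partrec.Code, ∀ n, n ∈ S ↔ (c.eval n).Dom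

/-! ## Hyperarithmetic reducibility (via the Δ¹₁ = HYP characterization) -/

def Pi11In (X : Cantor) (S : Set ℕ) : Prop :=
  ∃ R : Cantor, TRed R X ∧ ∀ n, n ∈ S ↔
    ∀ f : ℕ → ℕ, ∃ k, R (Nat.pair n (Encodable.encode ((List.range k).map f))) = true

/-- `Y` is hyperarithmetic in `X` (i.e. `Δ¹₁(X)`). -/
def HypIn (Y X : Cantor) : Prop :=
  Pi11In X {n | Y n = true} ∧ Pi11In X {n | Y n = false}

/-- `A` has an `X`-hyperarithmetic copy. -/
def HypCopy (X : Cantor) (A : Str ar) : Prop :=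
  ∃ B D, IsoStr A B ∧ DiagOf B D ∧ HypIn D X

/-! ## The theory `T_α` of the `α`-back-and-forth structure, semantically -/

/-- A structure in the extended language `L_α`: a base `L`-structure together with
interpretations of the relations `φ_σ`, where the `β`-bf-type `σ` is represented by a
pair `(C, c̄)` (a model of `T` with a distinguished tuple). -/
structure ExtModel (ar : ℕ → ℕ) where
  base : Str ar
  Phi : Ordinal.{0} → Str ar → List ℕ → List ℕ → Prop

/-- Interpretation of `ψ_σ(b̄) := ⋁_{σ' ∈ bf_α, (σ')_β = σ} φ_{σ'}(b̄)`,
with `σ` represented by `(C, c̄)`. -/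
def PsiH (T : IForm ar) (α : Ordinal.{0}) (M : ExtModel ar) (β : Ordinal.{0})
    (C : Str ar) (c b : List ℕ) : Prop :=
  ∃ (C' : Str ar) (c' : List ℕ), SatS C' T ∧ c'.length = b.length ∧
    BFEq β C' c' C c ∧ M.Phi α C' c' b

/-- `M` is a model of the theory `T_α` axiomatizing the `α`-bf-structure of `T`:
(invariance of the symbols `φ_σ` in the representative of `σ`), (T1) every tuple realizes
exactly one `β`-bf-type, (T2) the recursive definition of `φ_σ`, and (T3) the
implications of `ψ_σ`. -/
def ModelsTAlpha (T : IForm ar) (α : Ordinal.{0}) (M : ExtModel ar) : Prop :=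
  (∀ β ≤ α, ∀ (C : Str ar) (c : List ℕ) (C' : Str ar) (c' : List ℕ) (b : List ℕ),
      SatS C T → SatS C' T → BFEq β C c C' c' → (M.Phi β C c b ↔ M.Phi β C' c' b)) ∧
  (∀ b : List ℕ, ∃ (C : Str ar) (c : List ℕ), SatS C T ∧ c.length = b.length ∧
      M.Phi α C c b) ∧
  (∀ β < α, ∀ (b : List ℕ) (C : Str ar) (c : List ℕ) (C' : Str ar) (c' : List ℕ),
      SatS C T → SatS C' T → PsiH T α M β C c b → PsiH T α M β C' c' b →
      BFEq β C c C' c') ∧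
  (∀ β ≤ α, ∀ (C : Str ar) (c : List ℕ), SatS C T → ∀ b : List ℕ,
      (M.Phi β C c b ↔ b.length = c.length ∧
        (β = 0 → atomEquiv C c M.base b) ∧
        (∀ γ < β, ∀ (D : Str ar) (d : List ℕ), SatS D T → ¬ ExtMem γ D d C c →
          ∀ y : List ℕ, d.length = b.length + y.length → ¬ M.Phi γ D d (b ++ y)))) ∧
  (∀ β < α, ∀ (C : Str ar) (c b : List ℕ), SatS C T → PsiH T α M β C c b →
      M.Phi β C c b ∧ ∀ γ < β, ∀ (D : Str ar) (d : List ℕ), SatS D T →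
        ExtMem γ D d C c →
        ∃ y : List ℕ, d.length = b.length + y.length ∧ M.Phi γ D d (b ++ y))

/-! ## Presentations of the `α`-back-and-forth structure -/

/-- A presentation `𝔹` of the `α`-bf-structure of `T`: an enumeration of the bf-types
of levels `≤ α` (given by levels and representatives), together with an oracle `B`
coding the relations `≤_β`, the projections `(·)_β` and `π_ι`, the extension relations
`ext`, and the atomic diagrams of the `0`-bf-types. -/
structure BFPres (ar : ℕ → ℕ) (T : IForm ar) (α : Ordinal.{0}) where
  B : Cantor
  lvl : ℕ → Ordinal.{0}
  repS : ℕ → Str ar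
  repT : ℕ → List ℕ
  lvl_le : ∀ n, lvl n ≤ α
  rep_models : ∀ n, SatS (repS n) T
  surj : ∀ β ≤ α, ∀ (A : Str ar) (a : List ℕ), SatS A T →
    ∃ n, lvl n = β ∧ (repT n).length = a.length ∧ BFEq β (repS n) (repT n) A a
  le_code : ∀ m n, (B (Nat.pair 0 (Nat.pair m n)) = true ↔
    lvl m = lvl n ∧ BFLe (lvl m) (repS m) (repT m) (repS n) (repT n))
  proj_code : ∀ m n, (B (Nat.pair 1 (Nat.pair m n)) = true ↔
    lvl m ≤ lvl n ∧ BFEq (lvl m) (repS m) (repT m) (repS n) (repT n))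
  ext_code : ∀ m n, (B (Nat.pair 2 (Nat.pair m n)) = true ↔
    lvl m < lvl n ∧ ExtMem (lvl m) (repS m) (repT m) (repS n) (repT n))
  pi_code : ∀ m n (ι : List ℕ),
    (B (Nat.pair 3 (Nat.pair m (Nat.pair n (Encodable.encode ι)))) = true ↔
      lvl m = lvl n ∧ (∀ j ∈ ι, j < (repT n).length) ∧
      BFEq (lvl m) (repS m) (repT m) (repS n) (projT ι (repT n)))
  diag_code : ∀ m k, (B (Nat.pair 4 (Nat.pair m k)) = true ↔
    lvl m = 0 ∧ FinDiagMem (repS m) (repT m) k)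

end

/-! ### Auxiliary machinery for the proof of `bf_iff_pi_type` -/

section Aux
variable {ar : ℕ → ℕ}

open IForm

lemma sat_conj {A : Str ar} {s} {φs : ℕ → IForm ar} :
    Sat A s (.conj φs) ↔ ∀ n, Sat A s (φs n) := Iff.rfl

lemma sat_not {A : Str ar} {s} {φ : IForm ar} : Sat A s (.not φ) ↔ ¬ Sat A s φ := Iff.rfl

lemma sat_all {A : Str ar} {s} {x} {φ : IForm ar} :
    Sat A s (.all x φ) ↔ ∀ v, Sat A (Function.update s x v) φ := Iff.rfl

lemma sat_disj {A : Str ar} {s} {φs : ℕ → IForm ar} :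
    Sat A s (IForm.disj φs) ↔ ∃ n, Sat A s (φs n) := by
  simp only [IForm.disj, sat_not, sat_conj, not_forall, not_not]

lemma sat_ex {A : Str ar} {s} {x} {φ : IForm ar} :
    Sat A s (IForm.ex x φ) ↔ ∃ v, Sat A (Function.update s x v) φ := by
  simp only [IForm.ex, sat_not, sat_all, not_forall, not_not]

lemma sat_and {A : Str ar} {s} {φ ψ : IForm ar} :
    Sat A s (φ.and ψ) ↔ Sat A s φ ∧ Sat A s ψ := by
  constructor
  · intro h; exact ⟨by simpa using h 0, by simpa using h 1⟩
  · rintro ⟨h1, h2⟩ n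
    by_cases hn : n = 0 <;> simp [IForm.and, Sat, hn, h1, h2]

lemma fv_disj {φs : ℕ → IForm ar} :
    freeVars (IForm.disj φs) = ⋃ n, freeVars (φs n) := by
  simp [IForm.disj, freeVars]

lemma fv_ex {x} {φ : IForm ar} : freeVars (IForm.ex x φ) = freeVars φ \ {x} := by
  simp [IForm.ex, freeVars]

lemma fv_and {φ ψ : IForm ar} : freeVars (φ.and ψ) = freeVars φ ∪ freeVars ψ := by
  ext z
  simp only [IForm.and, freeVars, Set.mem_iUnion, Set.mem_union]
  constructor
  · rintro ⟨n, hn⟩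
    by_cases h : n = 0
    · subst h; left; simpa using hn
    · right; simpa [h] using hn
  · rintro (h | h)
    · exact ⟨0, by simpa using h⟩
    · exact ⟨1, by simpa using h⟩

/-- Satisfaction only depends on the values of the free variables. -/
lemma sat_congr {A : Str ar} {φ : IForm ar} :
    ∀ {s t : ℕ → ℕ}, (∀ x ∈ freeVars φ, s x = t x) → (Sat A s φ ↔ Sat A t φ) := by
  induction φ with
  | atom i v =>
    intro s t h
    have : (fun j => s (v j)) = fun j => t (v j) :=
      funext fun j => h (v j) ⟨j, rfl⟩
    simp only [Sat, this]
  | eq x y =>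
    intro s t h
    have hx := h x (by simp [freeVars])
    have hy := h y (by simp [freeVars])
    simp only [Sat, hx, hy]
  | not φ ih =>
    intro s t h
    simpa only [Sat] using not_congr (ih h)
  | conj φs ih =>
    intro s t h
    exact forall_congr' fun n => ih n fun x hx => h x (Set.mem_iUnion.2 ⟨n, hx⟩)
  | all x φ ih =>
    intro s t h
    refine forall_congr' fun v => ih fun y hy => ?_
    rcases eq_or_ne y x with rfl | hne
    · simp [Function.update]
    · simp only [Function.update_of_ne hne]
      exact h y ⟨hy, hne⟩

/-- Sequential update of an assignment along a list of variables and values. -/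
def updL (u : ℕ → ℕ) : List ℕ → List ℕ → ℕ → ℕ
  | x :: l, v :: w => updL (Function.update u x v) l w
  | _, _ => u

lemma updL_nil {u : ℕ → ℕ} {w} : updL u [] w = u := by cases w <;> rfl

lemma updL_not_mem {x : ℕ} : ∀ {l w : List ℕ} {u : ℕ → ℕ}, x ∉ l → updL u l w x = u x := by
  intro l
  induction l with
  | nil => intro w u _; simp [updL_nil]
  | cons y l ih =>
    intro w u hx
    cases w with
    | nil => rfl
    | cons v w =>
      simp only [List.mem_cons, not_or] at hx
      rw [updL, ih hx.2, Function.update_of_ne hx.1]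

lemma updL_mem : ∀ (l : List ℕ) (x : ℕ), x ∈ l →
    ∃ i < l.length, l.getD i 0 = x ∧
      ∀ (u : ℕ → ℕ) (w : List ℕ), w.length = l.length → updL u l w x = w.getD i 0 := by
  intro l
  induction l with
  | nil => intro x hx; simp at hx
  | cons y l ih =>
    intro x hx
    by_cases hxl : x ∈ l
    · obtain ⟨i, hi, hget, hval⟩ := ih x hxl
      refine ⟨i + 1, by simpa using hi, by simpa using hget, ?_⟩
      intro u w hw
      cases w with
      | nil => simp at hw
      | cons v w =>
        simp only [List.length_cons, Nat.succ.injEq] at hw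
        rw [updL, hval _ w hw]
        simp
    · have hxy : x = y := by
        rcases List.mem_cons.1 hx with h | h
        · exact h
        · exact absurd h hxl
      subst hxy
      refine ⟨0, by simp, by simp, ?_⟩
      intro u w hw
      cases w with
      | nil => simp at hw
      | cons v w =>
        simp only [List.length_cons, Nat.succ.injEq] at hw
        rw [updL, updL_not_mem hxl]
        simp

lemma sat_alls {A : Str ar} {φ : IForm ar} :
    ∀ {l : List ℕ} {u : ℕ → ℕ},
      Sat A u (IForm.alls l φ) ↔ ∀ w : List ℕ, w.length = l.length → Sat A (updL u l w) φ := by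
  intro l
  induction l with
  | nil =>
    intro u
    simp only [IForm.alls, List.foldr_nil]
    constructor
    · intro h w _; simpa [updL_nil] using h
    · intro h; simpa [updL_nil] using h [] rfl
  | cons x l ih =>
    intro u
    constructor
    · intro h w hw
      cases w with
      | nil => simp at hw
      | cons v w =>
        simp only [List.length_cons, Nat.succ.injEq] at hw
        rw [updL]
        exact ih.1 (h v) w hw
    · intro h v
      refine ih.2 fun w hw => ?_
      have := h (v :: w) (by simp [hw])
      rwa [updL] at this

lemma fv_alls {φ : IForm ar} : ∀ {l : List ℕ},
    freeVars (IForm.alls l φ) = freeVars φ \ {x | x ∈ l} := by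
  intro l
  induction l with
  | nil => simp [IForm.alls]
  | cons x l ih =>
    show freeVars (IForm.all x (IForm.alls l φ)) = _
    rw [show freeVars (IForm.all x (IForm.alls l φ)) = freeVars (IForm.alls l φ) \ {x} from rfl, ih]
    ext z
    simp only [Set.mem_diff, Set.mem_setOf_eq, List.mem_cons, Set.mem_singleton_iff]
    tauto

end Aux

section Aux2
variable {ar : ℕ → ℕ}

lemma sat_exs {A : Str ar} {φ : IForm ar} :
    ∀ {l : List ℕ} {u : ℕ → ℕ},
      Sat A u (IForm.exs l φ) ↔ ∃ w : List ℕ, w.length = l.length ∧ Sat A (updL u l w) φ := by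
  intro l
  induction l with
  | nil =>
    intro u
    simp only [IForm.exs, List.foldr_nil]
    constructor
    · intro h; exact ⟨[], rfl, by simpa [updL_nil] using h⟩
    · rintro ⟨w, -, h⟩; simpa [updL_nil] using h
  | cons x l ih =>
    intro u
    show Sat A u (IForm.ex x (IForm.exs l φ)) ↔ _
    rw [sat_ex]
    constructor
    · rintro ⟨v, hv⟩
      obtain ⟨w, hw, hsat⟩ := ih.1 hv
      exact ⟨v :: w, by simp [hw], by rwa [updL]⟩
    · rintro ⟨w, hw, hsat⟩
      cases w with
      | nil => simp at hw
      | cons v w =>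
        simp only [List.length_cons, Nat.succ.injEq] at hw
        exact ⟨v, ih.2 ⟨w, hw, by rwa [updL] at hsat⟩⟩

lemma fv_exs {φ : IForm ar} : ∀ {l : List ℕ},
    freeVars (IForm.exs l φ) = freeVars φ \ {x | x ∈ l} := by
  intro l
  induction l with
  | nil => simp [IForm.exs]
  | cons x l ih =>
    show freeVars (IForm.ex x (IForm.exs l φ)) = _
    rw [fv_ex, ih]
    ext z
    simp only [Set.mem_diff, Set.mem_setOf_eq, List.mem_cons, Set.mem_singleton_iff]
    tauto

/-- A bound on the relation symbols used in a quantifier-free formula. -/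
def qfBound : IForm ar → ℕ
  | .atom i _ => i + 1
  | .eq _ _ => 0
  | .not φ => qfBound φ
  | .conj φs => max (qfBound (φs 0)) (qfBound (φs 1))
  | .all _ φ => qfBound φ

lemma qfBound_and {φ ψ : IForm ar} : qfBound (φ.and ψ) = max (qfBound φ) (qfBound ψ) := by
  simp [IForm.and, qfBound]

/-- unfolding of `BFLe` at `0`. -/
lemma BFLe_zero {A : Str ar} {a : List ℕ} {B b} : BFLe 0 A a B b ↔ atomEquiv A a B b := by
  rw [BFLe]; simp

lemma BFLe_pos {α : Ordinal} (hα : α ≠ 0) {A : Str ar} {a : List ℕ} {B b} :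
    BFLe α A a B b ↔ ∀ (d : List ℕ) (γ : Ordinal), γ < α →
      ∃ c : List ℕ, c.length = d.length ∧ BFLe γ B (b ++ d) A (a ++ c) := by
  rw [BFLe]; simp [hα]

lemma atomEquiv_symm {A : Str ar} {a : List ℕ} {B b} (h : atomEquiv A a B b) :
    atomEquiv B b A a := by
  obtain ⟨hl, he, ha⟩ := h
  refine ⟨hl.symm, ?_, ?_⟩
  · intro p q hp hq
    exact (he p q (hl ▸ hp) (hl ▸ hq)).symm
  · intro i hi v hv
    exact (ha i (hl ▸ hi) v fun j => hl ▸ hv j).symm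

lemma atomEquiv_nil {A : Str ar} {B : Str ar} : atomEquiv A [] B [] := by
  exact ⟨rfl, fun p q hp _ => by simp at hp, fun i hi _ _ => by simp at hi⟩

/-- The key quantifier-free transfer lemma. -/
lemma qf_iff {A : Str ar} {a : List ℕ} {B b} (hE : atomEquiv A a B b) {φ : IForm ar}
    (hq : QFree φ) :
    qfBound φ ≤ a.length →
    ∀ {u v : ℕ → ℕ},
      (∀ z ∈ freeVars φ, ∃ p < a.length, u z = a.getD p 0 ∧ v z = b.getD p 0) →
      (Sat A u φ ↔ Sat B v φ) := by
  induction hq with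
  | @atom i w =>
    intro hb u v hc
    have hi : i < a.length := hb
    choose p hp hup hvp using fun j : Fin (ar i) => hc (w j) ⟨j, rfl⟩
    have h1 : (fun j => u (w j)) = fun j => a.getD (p j) 0 := funext fun j => hup j
    have h2 : (fun j => v (w j)) = fun j => b.getD (p j) 0 := funext fun j => hvp j
    show A i _ ↔ B i _
    rw [h1, h2]
    exact hE.2.2 i hi p hp
  | @eq x y =>
    intro _ u v hc
    obtain ⟨p, hp, hup, hvp⟩ := hc x (by simp [freeVars])
    obtain ⟨q, hq', huq, hvq⟩ := hc y (by simp [freeVars])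
    show u x = u y ↔ v x = v y
    rw [hup, hvp, huq, hvq]
    exact hE.2.1 p q hp hq'
  | @not φ _ ih =>
    intro hb u v hc
    exact not_congr (ih hb hc)
  | @and φ ψ _ _ ihφ ihψ =>
    intro hb u v hc
    rw [qfBound_and, max_le_iff] at hb
    rw [sat_and, sat_and]
    have hcφ : ∀ z ∈ freeVars φ, _ := fun z hz => hc z (fv_and ▸ Set.mem_union_left _ hz)
    have hcψ : ∀ z ∈ freeVars ψ, _ := fun z hz => hc z (fv_and ▸ Set.mem_union_right _ hz)
    exact and_congr (ihφ hb.1 hcφ) (ihψ hb.2 hcψ)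

end Aux2

section Aux3
variable {ar : ℕ → ℕ}

lemma fv_conj {φs : ℕ → IForm ar} : freeVars (IForm.conj φs) = ⋃ n, freeVars (φs n) := rfl

lemma getD_append_add {l l' : List ℕ} (i : ℕ) :
    (l ++ l').getD (l.length + i) 0 = l'.getD i 0 := by
  rw [List.getD_append_right _ _ _ _ (Nat.le_add_right _ _), Nat.add_sub_cancel_left]

lemma getD_take {c : List ℕ} {m i : ℕ} (h : i < m) : (c.take m).getD i 0 = c.getD i 0 := by
  rcases Nat.lt_or_ge i c.length with hic | hic
  · rw [List.getD_eq_getElem _ _ (by simp [hic, h]), List.getD_eq_getElem _ _ hic,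
      List.getElem_take]
  · rw [List.getD_eq_default _ _ (by simp [hic]), List.getD_eq_default _ _ hic]

lemma qf_transfer {α : Ordinal} {A : Str ar} {a : List ℕ} {B : Str ar} {b : List ℕ}
    (h : BFLe α A a B b) (hlen : a.length = b.length) {φ : IForm ar} (hq : QFree φ)
    {s t : ℕ → ℕ}
    (hc : ∀ z ∈ freeVars φ, ∃ p < a.length, s z = a.getD p 0 ∧ t z = b.getD p 0)
    (hor : qfBound φ ≤ a.length ∨ α ≠ 0) : Sat A s φ ↔ Sat B t φ := by
  rcases eq_or_ne α 0 with rfl | hα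
  · exact qf_iff (BFLe_zero.1 h) hq (hor.resolve_right (by simp)) hc
  · obtain ⟨c, hclen, h0⟩ :=
      (BFLe_pos hα).1 h (List.replicate (qfBound φ) 0) 0 (pos_iff_ne_zero.2 hα)
    have hE : atomEquiv B (b ++ List.replicate (qfBound φ) 0) A (a ++ c) := BFLe_zero.1 h0
    have hb : qfBound φ ≤ (b ++ List.replicate (qfBound φ) 0).length := by simp
    refine (qf_iff hE hq hb ?_).symm
    intro z hz
    obtain ⟨p, hp, hs, ht⟩ := hc z hz
    exact ⟨p, by simp; omega,
      by rw [List.getD_append _ _ _ _ (hlen ▸ hp)]; exact ht,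
      by rw [List.getD_append _ _ _ _ hp]; exact hs⟩

/-- The compatibility bookkeeping shared by the two `comp` cases of `pos_main`. -/
lemma compat_core {a b c w : List ℕ} (vs : List ℕ) {s t : ℕ → ℕ} {k : ℕ}
    (hlen : a.length = b.length) (hw : w.length = vs.length)
    (hclen : c.length = (w ++ List.replicate k 0).length)
    {z : ℕ} (hz : z ∉ vs → ∃ p < a.length, s z = a.getD p 0 ∧ t z = b.getD p 0) :
    ∃ p < (a ++ c).length,
      updL s vs (c.take w.length) z = (a ++ c).getD p 0 ∧
      updL t vs w z = (b ++ (w ++ List.replicate k 0)).getD p 0 := by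
  have hwc : w.length ≤ c.length := by simp at hclen; omega
  by_cases hzv : z ∈ vs
  · obtain ⟨i, hi, hgi, hval⟩ := updL_mem vs z hzv
    have hiw : i < w.length := hw ▸ hi
    have htake : (c.take w.length).length = vs.length := by
      rw [List.length_take]; omega
    refine ⟨a.length + i, by simp; omega, ?_, ?_⟩
    · rw [hval s (c.take w.length) htake, getD_append_add, getD_take hiw]
    · rw [hval t w hw, hlen, getD_append_add, List.getD_append _ _ _ _ hiw]
  · obtain ⟨p, hp, hs, ht⟩ := hz hzv
    refine ⟨p, by simp; omega, ?_, ?_⟩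
    · rw [updL_not_mem hzv, List.getD_append _ _ _ _ hp]; exact hs
    · rw [updL_not_mem hzv, List.getD_append _ _ _ _ (hlen ▸ hp)]; exact ht

/-- Forward direction: back-and-forth implies transfer of `Π`/`Σ` formulas. -/
lemma pos_main : ∀ α : Ordinal, ∀ (A : Str ar) (a : List ℕ) (B : Str ar) (b : List ℕ),
    BFLe α A a B b → a.length = b.length →
    (∀ φ : IForm ar, IsPi α φ → ∀ s t : ℕ → ℕ,
      (∀ z ∈ freeVars φ, ∃ p < a.length, s z = a.getD p 0 ∧ t z = b.getD p 0) →
      (qfBound φ ≤ a.length ∨ α ≠ 0) → Sat A s φ → Sat B t φ) ∧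
    (∀ φ : IForm ar, IsSig α φ → ∀ s t : ℕ → ℕ,
      (∀ z ∈ freeVars φ, ∃ p < a.length, s z = a.getD p 0 ∧ t z = b.getD p 0) →
      (qfBound φ ≤ a.length ∨ α ≠ 0) → Sat B t φ → Sat A s φ) := by
  intro α
  induction α using Ordinal.induction with
  | h α IH =>
  intro A a B b h hlen
  constructor
  · intro φ hφ
    cases hφ with
    | qf hq =>
      intro s t hc hor hsat
      exact (qf_transfer h hlen hq hc hor).1 hsat
    | comp β vss φs hβ hsig =>
      intro s t hc hor hsat
      rw [sat_conj]
      intro n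
      rw [sat_alls]
      intro w hw
      have hα : α ≠ 0 := fun h0 => not_lt_of_ge (zero_le (a := β n)) (h0 ▸ hβ n)
      obtain ⟨c, hclen, hbf⟩ :=
        (BFLe_pos hα).1 h (w ++ List.replicate (qfBound (φs n)) 0) (β n) (hβ n)
      have hwc : w.length ≤ c.length := by simp at hclen; omega
      have htake : (c.take w.length).length = (vss n).length := by
        rw [List.length_take]; omega
      have hsA : Sat A (updL s (vss n) (c.take w.length)) (φs n) :=
        sat_alls.1 (hsat n) _ htake
      have hlen2 : (b ++ (w ++ List.replicate (qfBound (φs n)) 0)).length = (a ++ c).length := by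
        simp; simp at hclen; omega
      have IH2 := (IH (β n) (hβ n) B _ A _ hbf hlen2).2 (φs n) (hsig n)
      refine IH2 (updL t (vss n) w) (updL s (vss n) (c.take w.length)) ?_
        (Or.inl (by simp; omega)) hsA
      intro z hz
      have hcore := compat_core (vss n) hlen hw hclen
        (s := s) (t := t) (z := z) (k := qfBound (φs n)) ?_
      · obtain ⟨p, hp, h1, h2⟩ := hcore
        exact ⟨p, hlen2 ▸ hp, h2, h1⟩
      · intro hzv
        refine hc z ?_
        rw [fv_conj]
        exact Set.mem_iUnion.2 ⟨n, by rw [fv_alls]; exact ⟨hz, hzv⟩⟩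
  · intro φ hφ
    cases hφ with
    | qf hq =>
      intro s t hc hor hsat
      exact (qf_transfer h hlen hq hc hor).2 hsat
    | comp β vss φs hβ hpi =>
      intro s t hc hor hsat
      obtain ⟨n, hn⟩ := sat_disj.1 hsat
      obtain ⟨w, hw, hsatw⟩ := sat_exs.1 hn
      have hα : α ≠ 0 := fun h0 => not_lt_of_ge (zero_le (a := β n)) (h0 ▸ hβ n)
      obtain ⟨c, hclen, hbf⟩ :=
        (BFLe_pos hα).1 h (w ++ List.replicate (qfBound (φs n)) 0) (β n) (hβ n)
      have hwc : w.length ≤ c.length := by simp at hclen; omega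
      have htake : (c.take w.length).length = (vss n).length := by
        rw [List.length_take]; omega
      have hlen2 : (b ++ (w ++ List.replicate (qfBound (φs n)) 0)).length = (a ++ c).length := by
        simp; simp at hclen; omega
      have IH2 := (IH (β n) (hβ n) B _ A _ hbf hlen2).1 (φs n) (hpi n)
      have hsA : Sat A (updL s (vss n) (c.take w.length)) (φs n) := by
        refine IH2 (updL t (vss n) w) (updL s (vss n) (c.take w.length)) ?_
          (Or.inl (by simp; omega)) hsatw
        intro z hz
        have hcore := compat_core (vss n) hlen hw hclen
          (s := s) (t := t) (z := z) (k := qfBound (φs n)) ?_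
        · obtain ⟨p, hp, h1, h2⟩ := hcore
          exact ⟨p, hlen2 ▸ hp, h2, h1⟩
        · intro hzv
          refine hc z ?_
          rw [fv_disj]
          exact Set.mem_iUnion.2 ⟨n, by rw [fv_exs]; exact ⟨hz, hzv⟩⟩
      exact sat_disj.2 ⟨n, sat_exs.2 ⟨c.take w.length, htake, hsA⟩⟩

end Aux3

section Aux4
variable {ar : ℕ → ℕ}

lemma tuplesBelow_mem {k n : ℕ} : ∀ {l : List ℕ},
    l ∈ tuplesBelow k n ↔ l.length = n ∧ ∀ x ∈ l, x < k := by
  induction n with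
  | zero =>
    intro l
    simp only [tuplesBelow, List.mem_singleton, List.length_eq_zero_iff]
    constructor
    · rintro rfl; exact ⟨rfl, by simp⟩
    · rintro ⟨h, -⟩; exact h
  | succ n ih =>
    intro l
    simp only [tuplesBelow, List.mem_flatMap, List.mem_map, List.mem_range]
    constructor
    · rintro ⟨x, hx, l', hl', rfl⟩
      obtain ⟨hlen, hall⟩ := ih.1 hl'
      refine ⟨by simp [hlen], ?_⟩
      intro y hy
      rcases List.mem_cons.1 hy with rfl | hy
      exacts [hx, hall y hy]
    · rintro ⟨hlen, hall⟩
      cases l with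
      | nil => simp at hlen
      | cons x l' =>
        exact ⟨x, hall x (by simp), l',
          ih.2 ⟨by simpa using hlen, fun y hy => hall y (by simp [hy])⟩, rfl⟩

def atomList (ar : ℕ → ℕ) (L : ℕ) : List (IForm ar) :=
  ((List.range L).flatMap fun p => (List.range L).map fun q => IForm.eq p q) ++
  ((List.range L).flatMap fun i =>
    (tuplesBelow L (ar i)).map fun l => IForm.atom i fun j => l.getD (j : ℕ) 0)

def litList (ar : ℕ → ℕ) (L : ℕ) : List (IForm ar) :=
  atomList ar L ++ (atomList ar L).map .not

lemma atomList_props {L : ℕ} {φ : IForm ar} (h : φ ∈ atomList ar L) :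
    QFree φ ∧ qfBound φ ≤ L ∧ freeVars φ ⊆ Set.Iio L := by
  rcases List.mem_append.1 h with h | h
  · simp only [List.mem_flatMap, List.mem_map, List.mem_range] at h
    obtain ⟨p, hp, q, hq, rfl⟩ := h
    refine ⟨QFree.eq, by simp [qfBound], ?_⟩
    intro z hz
    simp only [freeVars, Set.mem_insert_iff, Set.mem_singleton_iff] at hz
    simp only [Set.mem_Iio]
    rcases hz with rfl | rfl
    exacts [hp, hq]
  · simp only [List.mem_flatMap, List.mem_map, List.mem_range] at h
    obtain ⟨i, hi, l, hl, rfl⟩ := h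
    obtain ⟨hlen, hall⟩ := tuplesBelow_mem.1 hl
    have hL : 0 < L := Nat.lt_of_le_of_lt (Nat.zero_le i) hi
    refine ⟨QFree.atom, by simpa [qfBound] using hi, ?_⟩
    rintro z ⟨j, rfl⟩
    simp only [Set.mem_Iio]
    rcases Nat.lt_or_ge (j : ℕ) l.length with hj | hj
    · exact hall _ (List.getD_eq_getElem l 0 hj ▸ List.getElem_mem _)
    · rw [List.getD_eq_default _ _ hj]; omega

lemma litList_props {L : ℕ} {φ : IForm ar} (h : φ ∈ litList ar L) :
    QFree φ ∧ qfBound φ ≤ L ∧ freeVars φ ⊆ Set.Iio L := by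
  rcases List.mem_append.1 h with h | h
  · exact atomList_props h
  · obtain ⟨ψ, hψ, rfl⟩ := List.mem_map.1 h
    obtain ⟨h1, h2, h3⟩ := atomList_props hψ
    exact ⟨QFree.not h1, h2, h3⟩

lemma eq_mem_atomList {L p q : ℕ} (hp : p < L) (hq : q < L) :
    (IForm.eq p q : IForm ar) ∈ atomList ar L := by
  refine List.mem_append.2 (Or.inl ?_)
  simp only [List.mem_flatMap, List.mem_map, List.mem_range]
  exact ⟨p, hp, q, hq, rfl⟩

lemma atom_mem_atomList {L i : ℕ} (hi : i < L) (v : Fin (ar i) → ℕ) (hv : ∀ j, v j < L) :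
    (IForm.atom i v : IForm ar) ∈ atomList ar L := by
  refine List.mem_append.2 (Or.inr ?_)
  simp only [List.mem_flatMap, List.mem_map, List.mem_range]
  refine ⟨i, hi, List.ofFn v, tuplesBelow_mem.2 ⟨by simp, ?_⟩, ?_⟩
  · intro x hx
    obtain ⟨j, rfl⟩ := List.mem_ofFn.1 hx
    exact hv j
  · congr 1
    funext j
    rw [List.getD_eq_getElem _ _ (by simp [j.isLt])]
    simp

/-- Separating literal from a failure of `atomEquiv`; the literal holds in `Q` and fails
in `P`. -/
lemma sep_literal {P : Str ar} {p : List ℕ} {Q : Str ar} {q : List ℕ}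
    (hl : p.length = q.length) (h : ¬ atomEquiv P p Q q) :
    ∃ lam ∈ litList ar p.length, Sat Q (asn q) lam ∧ ¬ Sat P (asn p) lam := by
  have h' : ¬ ((∀ i j, i < p.length → j < p.length →
        (p.getD i 0 = p.getD j 0 ↔ q.getD i 0 = q.getD j 0)) ∧
      (∀ i, i < p.length → ∀ v : Fin (ar i) → ℕ, (∀ j, v j < p.length) →
        (P i (fun j => p.getD (v j) 0) ↔ Q i fun j => q.getD (v j) 0))) :=
    fun hh => h ⟨hl, hh.1, hh.2⟩
  rcases not_and_or.1 h' with h2 | h3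
  · push_neg at h2
    obtain ⟨i, j, hi, hj, hne⟩ := h2
    rcases hne with ⟨hP, hQ⟩ | ⟨hP, hQ⟩
    · exact ⟨IForm.not (IForm.eq i j),
        List.mem_append.2 (Or.inr (List.mem_map.2 ⟨_, eq_mem_atomList hi hj, rfl⟩)),
        hQ, fun hc => hc hP⟩
    · exact ⟨IForm.eq i j,
        List.mem_append.2 (Or.inl (eq_mem_atomList hi hj)), hQ, hP⟩
  · push_neg at h3
    obtain ⟨i, hi, v, hv, hne⟩ := h3
    rcases hne with ⟨hP, hQ⟩ | ⟨hP, hQ⟩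
    · exact ⟨IForm.not (IForm.atom i v),
        List.mem_append.2 (Or.inr (List.mem_map.2 ⟨_, atom_mem_atomList hi v hv, rfl⟩)),
        hQ, fun hc => hc hP⟩
    · exact ⟨IForm.atom i v,
        List.mem_append.2 (Or.inl (atom_mem_atomList hi v hv)), hQ, hP⟩

def bigOr : List (IForm ar) → IForm ar
  | [] => IForm.not (IForm.eq 0 0)
  | φ :: S => IForm.not ((IForm.not φ).and (IForm.not (bigOr S)))

def bigAnd : List (IForm ar) → IForm ar
  | [] => IForm.eq 0 0
  | φ :: S => φ.and (bigAnd S)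

lemma bigOr_cons {φ : IForm ar} {S} :
    bigOr (φ :: S) = IForm.not ((IForm.not φ).and (IForm.not (bigOr S))) := by rw [bigOr]

lemma bigAnd_cons {φ : IForm ar} {S} : bigAnd (φ :: S) = φ.and (bigAnd S) := by rw [bigAnd]

lemma sat_bigOr {M : Str ar} {u : ℕ → ℕ} : ∀ {S : List (IForm ar)},
    Sat M u (bigOr S) ↔ ∃ φ ∈ S, Sat M u φ := by
  intro S
  induction S with
  | nil => simp [bigOr, Sat]
  | cons φ S ih =>
    rw [bigOr_cons,
      sat_not, sat_and, sat_not, sat_not]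
    simp only [not_and, not_not, List.mem_cons]
    constructor
    · intro h
      by_cases hφ : Sat M u φ
      · exact ⟨φ, Or.inl rfl, hφ⟩
      · obtain ⟨ψ, hψ, hs⟩ := ih.1 (h hφ)
        exact ⟨ψ, Or.inr hψ, hs⟩
    · rintro ⟨ψ, (rfl | hψ), hs⟩
      · intro hc; exact absurd hs hc
      · intro _; exact ih.2 ⟨ψ, hψ, hs⟩

lemma sat_bigAnd {M : Str ar} {u : ℕ → ℕ} : ∀ {S : List (IForm ar)},
    Sat M u (bigAnd S) ↔ ∀ φ ∈ S, Sat M u φ := by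
  intro S
  induction S with
  | nil => simp [bigAnd, Sat]
  | cons φ S ih =>
    rw [bigAnd_cons, sat_and, ih]
    simp

lemma qfree_bigOr : ∀ {S : List (IForm ar)}, (∀ φ ∈ S, QFree φ) → QFree (bigOr S) := by
  intro S
  induction S with
  | nil => intro _; exact QFree.not QFree.eq
  | cons φ S ih =>
    intro h
    exact QFree.not (QFree.and (QFree.not (h φ (by simp)))
      (QFree.not (ih fun ψ hψ => h ψ (by simp [hψ]))))

lemma qfree_bigAnd : ∀ {S : List (IForm ar)}, (∀ φ ∈ S, QFree φ) → QFree (bigAnd S) := by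
  intro S
  induction S with
  | nil => intro _; exact QFree.eq
  | cons φ S ih =>
    intro h
    exact QFree.and (h φ (by simp)) (ih fun ψ hψ => h ψ (by simp [hψ]))

lemma fv_bigOr : ∀ {S : List (IForm ar)},
    freeVars (bigOr S) ⊆ {0} ∪ ⋃ φ ∈ S, freeVars φ := by
  intro S
  induction S with
  | nil => intro z hz; simp [bigOr, freeVars] at hz; simp [hz]
  | cons φ S ih =>
    intro z hz
    rw [bigOr_cons,
      show freeVars (IForm.not ((IForm.not φ).and (IForm.not (bigOr S))))
        = freeVars ((IForm.not φ).and (IForm.not (bigOr S))) from rfl, fv_and] at hz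
    rcases hz with hz | hz
    · simp only [Set.mem_union, Set.mem_iUnion]
      exact Or.inr ⟨φ, by simp, hz⟩
    · rcases ih hz with hz | hz
      · exact Or.inl hz
      · simp only [Set.mem_iUnion, exists_prop] at hz
        obtain ⟨ψ, hψ, hzψ⟩ := hz
        exact Or.inr (Set.mem_iUnion.2 ⟨ψ, by simp [hψ, hzψ]⟩)

lemma fv_bigAnd : ∀ {S : List (IForm ar)},
    freeVars (bigAnd S) ⊆ {0} ∪ ⋃ φ ∈ S, freeVars φ := by
  intro S
  induction S with
  | nil => intro z hz; simp [bigAnd, freeVars] at hz; simp [hz]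
  | cons φ S ih =>
    intro z hz
    rw [bigAnd_cons, fv_and] at hz
    rcases hz with hz | hz
    · simp only [Set.mem_union, Set.mem_iUnion]
      exact Or.inr ⟨φ, by simp, hz⟩
    · rcases ih hz with hz | hz
      · exact Or.inl hz
      · simp only [Set.mem_iUnion, exists_prop] at hz
        obtain ⟨ψ, hψ, hzψ⟩ := hz
        exact Or.inr (Set.mem_iUnion.2 ⟨ψ, by simp [hψ, hzψ]⟩)

end Aux4

section Aux5
variable {ar : ℕ → ℕ}

lemma sig_normal {γ : Ordinal} (hγ : γ ≠ 0) {σ : IForm ar} (h : IsSig γ σ) :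
    ∃ (β : ℕ → Ordinal) (vs : ℕ → List ℕ) (φs : ℕ → IForm ar),
      (∀ m, β m < γ) ∧ (∀ m, IsPi (β m) (φs m)) ∧
      (∀ (M : Str ar) (u : ℕ → ℕ),
        Sat M u σ ↔ ∃ m, Sat M u (IForm.exs (vs m) (φs m))) ∧
      (⋃ m, freeVars (IForm.exs (vs m) (φs m))) = freeVars σ := by
  cases h with
  | qf hq =>
    refine ⟨fun _ => 0, fun _ => [], fun _ => σ, fun _ => pos_iff_ne_zero.2 hγ,
      fun _ => IsPi.qf hq, fun M u => ?_, ?_⟩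
    · show Sat M u σ ↔ ∃ _ : ℕ, Sat M u σ
      exact ⟨fun hs => ⟨0, hs⟩, fun ⟨_, hs⟩ => hs⟩
    · show (⋃ _ : ℕ, freeVars σ) = freeVars σ
      exact Set.iUnion_const _
  | comp β vs φs hβ hpi =>
    exact ⟨β, vs, φs, hβ, hpi, fun M u => sat_disj, fv_disj.symm⟩

lemma pi_normal {γ : Ordinal} (hγ : γ ≠ 0) {π : IForm ar} (h : IsPi γ π) :
    ∃ (β : ℕ → Ordinal) (vs : ℕ → List ℕ) (φs : ℕ → IForm ar),
      (∀ m, β m < γ) ∧ (∀ m, IsSig (β m) (φs m)) ∧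
      (∀ (M : Str ar) (u : ℕ → ℕ),
        Sat M u π ↔ ∀ m, Sat M u (IForm.alls (vs m) (φs m))) ∧
      (⋃ m, freeVars (IForm.alls (vs m) (φs m))) = freeVars π := by
  cases h with
  | qf hq =>
    refine ⟨fun _ => 0, fun _ => [], fun _ => π, fun _ => pos_iff_ne_zero.2 hγ,
      fun _ => IsSig.qf hq, fun M u => ?_, ?_⟩
    · show Sat M u π ↔ ∀ _ : ℕ, Sat M u π
      exact ⟨fun hs _ => hs, fun hs => hs 0⟩
    · show (⋃ _ : ℕ, freeVars π) = freeVars π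
      exact Set.iUnion_const _
  | comp β vs φs hβ hsig =>
    exact ⟨β, vs, φs, hβ, hsig, fun M u => sat_conj, fv_conj.symm⟩

lemma merge_sig {γ : Ordinal} (hγ : γ ≠ 0) (σ : ℕ → IForm ar) (h : ∀ k, IsSig γ (σ k)) :
    ∃ χ : IForm ar, IsSig γ χ ∧ freeVars χ = (⋃ k, freeVars (σ k)) ∧
      ∀ (M : Str ar) (u : ℕ → ℕ), Sat M u χ ↔ ∃ k, Sat M u (σ k) := by
  choose β vs φs hβ hpi hsat hfv using fun k => sig_normal hγ (h k)
  refine ⟨IForm.disj fun n => IForm.exs (vs n.unpair.1 n.unpair.2) (φs n.unpair.1 n.unpair.2),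
    IsSig.comp _ _ _ (fun n => hβ _ _) (fun n => hpi _ _), ?_, ?_⟩
  · rw [fv_disj]
    ext z
    simp only [Set.mem_iUnion]
    constructor
    · rintro ⟨n, hn⟩
      exact ⟨n.unpair.1, (hfv n.unpair.1) ▸ Set.mem_iUnion.2 ⟨n.unpair.2, hn⟩⟩
    · rintro ⟨k, hk⟩
      rw [← hfv k] at hk
      obtain ⟨m, hm⟩ := Set.mem_iUnion.1 hk
      exact ⟨Nat.pair k m, by simpa only [Nat.unpair_pair] using hm⟩
  · intro M u
    rw [sat_disj]
    constructor
    · rintro ⟨n, hn⟩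
      exact ⟨n.unpair.1, (hsat _ M u).2 ⟨n.unpair.2, hn⟩⟩
    · rintro ⟨k, hk⟩
      obtain ⟨m, hm⟩ := (hsat k M u).1 hk
      exact ⟨Nat.pair k m, by simpa only [Nat.unpair_pair] using hm⟩

lemma merge_pi {γ : Ordinal} (hγ : γ ≠ 0) (τ : ℕ → IForm ar) (h : ∀ k, IsPi γ (τ k)) :
    ∃ θ : IForm ar, IsPi γ θ ∧ freeVars θ = (⋃ k, freeVars (τ k)) ∧
      ∀ (M : Str ar) (u : ℕ → ℕ), Sat M u θ ↔ ∀ k, Sat M u (τ k) := by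
  choose β vs φs hβ hsig hsat hfv using fun k => pi_normal hγ (h k)
  refine ⟨IForm.conj fun n => IForm.alls (vs n.unpair.1 n.unpair.2) (φs n.unpair.1 n.unpair.2),
    IsPi.comp _ _ _ (fun n => hβ _ _) (fun n => hsig _ _), ?_, ?_⟩
  · rw [fv_conj]
    ext z
    simp only [Set.mem_iUnion]
    constructor
    · rintro ⟨n, hn⟩
      exact ⟨n.unpair.1, (hfv n.unpair.1) ▸ Set.mem_iUnion.2 ⟨n.unpair.2, hn⟩⟩
    · rintro ⟨k, hk⟩
      rw [← hfv k] at hk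
      obtain ⟨m, hm⟩ := Set.mem_iUnion.1 hk
      exact ⟨Nat.pair k m, by simpa only [Nat.unpair_pair] using hm⟩
  · intro M u
    rw [sat_conj]
    constructor
    · intro hn k
      refine (hsat k M u).2 fun m => ?_
      have := hn (Nat.pair k m)
      simpa only [Nat.unpair_pair] using this
    · intro hk n
      have := (hsat n.unpair.1 M u).1 (hk n.unpair.1)
      exact this n.unpair.2

end Aux5

section Aux6
variable {ar : ℕ → ℕ}

/-- The canonical list of fresh variables `x.length, …, x.length + n - 1`. -/
def freshL (k n : ℕ) : List ℕ := (List.range n).map (· + k)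

lemma freshL_length {k n : ℕ} : (freshL k n).length = n := by simp [freshL]

lemma freshL_mem {k n z : ℕ} : z ∈ freshL k n ↔ k ≤ z ∧ z < k + n := by
  simp only [freshL, List.mem_map, List.mem_range]
  constructor
  · rintro ⟨i, hi, rfl⟩; omega
  · intro hz; exact ⟨z - k, by omega, by omega⟩

lemma updL_asn_key {k : ℕ} {d v w : List ℕ} (hv : v.length = k) (hw : w.length = d.length)
    {z : ℕ} (hz : z < k + d.length) :
    updL (asn v) (freshL k d.length) w z = asn (v ++ w) z := by
  by_cases hzL : z ∈ freshL k d.length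
  · obtain ⟨i, hi, hgi, hval⟩ := updL_mem _ z hzL
    have hilen : i < d.length := by simpa [freshL_length] using hi
    have hgi' : i + k = z := by
      rw [List.getD_eq_getElem _ _ (by simpa [freshL_length] using hi)] at hgi
      simpa [freshL] using hgi
    rw [hval (asn v) w (by rw [hw, freshL_length])]
    show w.getD i 0 = (v ++ w).getD z 0
    rw [← hgi', ← hv]
    rw [show i + v.length = v.length + i by omega, getD_append_add]
  · have hzk : z < k := by
      rcases Nat.lt_or_ge z k with h | h
      · exact h
      · exact absurd (freshL_mem.2 ⟨h, hz⟩) hzL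
    rw [updL_not_mem hzL]
    show v.getD z 0 = (v ++ w).getD z 0
    rw [List.getD_append _ _ _ _ (by omega)]

lemma packagePi {γ : Ordinal} {X : Str ar} {x : List ℕ} {Y : Str ar} {y : List ℕ}
    (hlen : x.length = y.length) {d : List ℕ} {β' : Ordinal} (hβ' : β' < γ) {χ : IForm ar}
    (hχ : IsSig β' χ) (hfv : freeVars χ ⊆ Set.Iio (x.length + d.length))
    (hX : ∀ c : List ℕ, c.length = d.length → Sat X (asn (x ++ c)) χ)
    (hY : ¬ Sat Y (asn (y ++ d)) χ) :
    ∃ φ, IsPi γ φ ∧ freeVars φ ⊆ Set.Iio x.length ∧ Sat X (asn x) φ ∧ ¬ Sat Y (asn y) φ := by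
  set L : List ℕ := freshL x.length d.length with hL
  refine ⟨IForm.conj fun _ => IForm.alls L χ,
    IsPi.comp (fun _ => β') (fun _ => L) (fun _ => χ) (fun _ => hβ') (fun _ => hχ), ?_, ?_, ?_⟩
  · intro z hz
    rw [fv_conj] at hz
    obtain ⟨n, hz⟩ := Set.mem_iUnion.1 hz
    rw [fv_alls] at hz
    have h1 : z < x.length + d.length := hfv hz.1
    have h2 : z ∉ L := hz.2
    simp only [Set.mem_Iio]
    rcases Nat.lt_or_ge z x.length with h | h
    · exact h
    · exact absurd (freshL_mem.2 ⟨h, h1⟩) h2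
  · rw [sat_conj]
    intro n
    rw [sat_alls]
    intro w hw
    have hw' : w.length = d.length := by rw [hw, hL, freshL_length]
    exact (sat_congr fun z hz => updL_asn_key rfl hw' (hfv hz)).2 (hX w hw')
  · intro hsat
    have h0 := sat_alls.1 (sat_conj.1 hsat 0) d (by rw [hL, freshL_length])
    exact hY ((sat_congr fun z hz => updL_asn_key hlen.symm rfl (hfv hz)).1 h0)

lemma packageSig {γ : Ordinal} {X : Str ar} {x : List ℕ} {Y : Str ar} {y : List ℕ}
    (hlen : x.length = y.length) {d : List ℕ} {β' : Ordinal} (hβ' : β' < γ) {θ : IForm ar}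
    (hθ : IsPi β' θ) (hfv : freeVars θ ⊆ Set.Iio (x.length + d.length))
    (hY : Sat Y (asn (y ++ d)) θ)
    (hX : ∀ c : List ℕ, c.length = d.length → ¬ Sat X (asn (x ++ c)) θ) :
    ∃ σ, IsSig γ σ ∧ freeVars σ ⊆ Set.Iio x.length ∧ Sat Y (asn y) σ ∧ ¬ Sat X (asn x) σ := by
  set L : List ℕ := freshL x.length d.length with hL
  refine ⟨IForm.disj fun _ => IForm.exs L θ,
    IsSig.comp (fun _ => β') (fun _ => L) (fun _ => θ) (fun _ => hβ') (fun _ => hθ), ?_, ?_, ?_⟩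
  · intro z hz
    rw [fv_disj] at hz
    obtain ⟨n, hz⟩ := Set.mem_iUnion.1 hz
    rw [fv_exs] at hz
    have h1 : z < x.length + d.length := hfv hz.1
    have h2 : z ∉ L := hz.2
    simp only [Set.mem_Iio]
    rcases Nat.lt_or_ge z x.length with h | h
    · exact h
    · exact absurd (freshL_mem.2 ⟨h, h1⟩) h2
  · refine sat_disj.2 ⟨0, sat_exs.2 ⟨d, by rw [hL, freshL_length], ?_⟩⟩
    exact (sat_congr fun z hz => updL_asn_key hlen.symm rfl (hfv hz)).2 hY
  · intro hsat
    obtain ⟨n, hn⟩ := sat_disj.1 hsat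
    obtain ⟨w, hw, hsw⟩ := sat_exs.1 hn
    have hw' : w.length = d.length := by rw [hw, hL, freshL_length]
    exact hX w hw' ((sat_congr fun z hz => updL_asn_key rfl hw' (hfv hz)).1 hsw)

end Aux6

section Aux7
variable {ar : ℕ → ℕ}

/-- Decode a natural number as a list of the prescribed length. -/
def padDec (n m : ℕ) : List ℕ :=
  (Denumerable.ofNat (List ℕ) m).take n ++
    List.replicate (n - (Denumerable.ofNat (List ℕ) m).length) 0

lemma padDec_length {n m : ℕ} : (padDec n m).length = n := by
  simp [padDec]; omega

lemma padDec_encode {n : ℕ} {c : List ℕ} (hc : c.length = n) :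
    padDec n (Encodable.encode c) = c := by
  simp [padDec, Denumerable.ofNat_encode, hc]

/-- If the back-and-forth relation fails, there are both `Π` and `Σ` formulas
witnessing the failure. -/
lemma neg_main : ∀ γ : Ordinal, ∀ (X : Str ar) (x : List ℕ) (Y : Str ar) (y : List ℕ),
    x.length = y.length → ¬ BFLe γ X x Y y →
    (∃ φ, IsPi γ φ ∧ freeVars φ ⊆ Set.Iio x.length ∧ Sat X (asn x) φ ∧ ¬ Sat Y (asn y) φ) ∧
    (∃ σ, IsSig γ σ ∧ freeVars σ ⊆ Set.Iio x.length ∧ Sat Y (asn y) σ ∧ ¬ Sat X (asn x) σ) := by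
  intro γ
  induction γ using Ordinal.induction with
  | h γ IH =>
  intro X x Y y hlen hbf
  rcases eq_or_ne γ 0 with rfl | hγ
  · rw [BFLe_zero] at hbf
    constructor
    · obtain ⟨lam, hmem, hQ, hP⟩ :=
        sep_literal hlen.symm (fun h => hbf (atomEquiv_symm h))
      obtain ⟨hqf, -, hfv⟩ := litList_props hmem
      exact ⟨lam, IsPi.qf hqf, by rwa [hlen], hQ, hP⟩
    · obtain ⟨lam, hmem, hQ, hP⟩ := sep_literal hlen hbf
      obtain ⟨hqf, -, hfv⟩ := litList_props hmem
      exact ⟨lam, IsSig.qf hqf, hfv, hQ, hP⟩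
  · rw [BFLe_pos hγ] at hbf
    push_neg at hbf
    obtain ⟨d, γ', hγ', hall⟩ := hbf
    have hydlen : (y ++ d).length = x.length + d.length := by
      rw [List.length_append, hlen]
    rcases eq_or_ne γ' 0 with rfl | hγ'0
    · -- level-0 failures: finite literal disjunction/conjunction
      rcases Nat.eq_zero_or_pos (x.length + d.length) with hzero | hpos
      · exfalso
        have hx : x = [] := List.length_eq_zero_iff.1 (by omega)
        have hd : d = [] := List.length_eq_zero_iff.1 (by omega)
        have hy : y = [] := List.length_eq_zero_iff.1 (by omega)
        refine hall [] (by simp [hd]) ?_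
        rw [BFLe_zero, hx, hd, hy]
        simpa using atomEquiv_nil
      have hae : ∀ c : List ℕ, c.length = d.length →
          ¬ atomEquiv Y (y ++ d) X (x ++ c) := by
        intro c hc h
        exact hall c hc (BFLe_zero.2 h)
      have hlen' : ∀ {c : List ℕ}, c.length = d.length →
          (y ++ d).length = (x ++ c).length := by
        intro c hc; simp [hlen, hc]
      constructor
      · -- Π-formula
        set S : List (IForm ar) :=
          (litList ar (y ++ d).length).filter
            (fun lam => decide (¬ Sat Y (asn (y ++ d)) lam)) with hS
        have hmemS : ∀ lam, lam ∈ S ↔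
            lam ∈ litList ar (y ++ d).length ∧ ¬ Sat Y (asn (y ++ d)) lam := by
          intro lam
          rw [hS, List.mem_filter, decide_eq_true_eq]
        have hqfS : QFree (bigOr S) :=
          qfree_bigOr fun ψ hψ => (litList_props ((hmemS ψ).1 hψ).1).1
        have hfvS : freeVars (bigOr S) ⊆ Set.Iio (x.length + d.length) := by
          refine fv_bigOr.trans ?_
          rintro z (rfl | hz)
          · exact hpos
          · simp only [Set.mem_iUnion, exists_prop] at hz
            obtain ⟨ψ, hψ, hzψ⟩ := hz
            exact Set.Iio_subset_Iio (le_of_eq hydlen)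
              ((litList_props ((hmemS ψ).1 hψ).1).2.2 hzψ)
        have hXχ : ∀ c : List ℕ, c.length = d.length → Sat X (asn (x ++ c)) (bigOr S) := by
          intro c hc
          obtain ⟨lam, hmem, hQ, hP⟩ := sep_literal (hlen' hc) (hae c hc)
          exact sat_bigOr.2 ⟨lam, (hmemS lam).2 ⟨hmem, hP⟩, hQ⟩
        have hYχ : ¬ Sat Y (asn (y ++ d)) (bigOr S) := by
          intro hs
          obtain ⟨lam, hmem, hsat⟩ := sat_bigOr.1 hs
          exact ((hmemS lam).1 hmem).2 hsat
        exact packagePi hlen (pos_iff_ne_zero.2 hγ) (IsSig.qf hqfS) hfvS hXχ hYχ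
      · -- Σ-formula
        set S : List (IForm ar) :=
          (litList ar (y ++ d).length).filter
            (fun lam => decide (Sat Y (asn (y ++ d)) lam)) with hS
        have hmemS : ∀ lam, lam ∈ S ↔
            lam ∈ litList ar (y ++ d).length ∧ Sat Y (asn (y ++ d)) lam := by
          intro lam
          rw [hS, List.mem_filter, decide_eq_true_eq]
        have hqfS : QFree (bigAnd S) :=
          qfree_bigAnd fun ψ hψ => (litList_props ((hmemS ψ).1 hψ).1).1
        have hfvS : freeVars (bigAnd S) ⊆ Set.Iio (x.length + d.length) := by
          refine fv_bigAnd.trans ?_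
          rintro z (rfl | hz)
          · exact hpos
          · simp only [Set.mem_iUnion, exists_prop] at hz
            obtain ⟨ψ, hψ, hzψ⟩ := hz
            exact Set.Iio_subset_Iio (le_of_eq hydlen)
              ((litList_props ((hmemS ψ).1 hψ).1).2.2 hzψ)
        have hYθ : Sat Y (asn (y ++ d)) (bigAnd S) :=
          sat_bigAnd.2 fun ψ hψ => ((hmemS ψ).1 hψ).2
        have hXθ : ∀ c : List ℕ, c.length = d.length → ¬ Sat X (asn (x ++ c)) (bigAnd S) := by
          intro c hc hs
          have hsym : ¬ atomEquiv X (x ++ c) Y (y ++ d) :=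
            fun h => hae c hc (atomEquiv_symm h)
          obtain ⟨lam, hmem, hQ, hP⟩ := sep_literal (hlen' hc).symm hsym
          rw [show (x ++ c).length = (y ++ d).length from (hlen' hc).symm] at hmem
          exact hP (sat_bigAnd.1 hs lam ((hmemS lam).2 ⟨hmem, hQ⟩))
        exact packageSig hlen (pos_iff_ne_zero.2 hγ) (IsPi.qf hqfS) hfvS hYθ hXθ
    · -- positive level failures: use the induction hypothesis and merging
      have hIH := fun m : ℕ => IH γ' hγ' Y (y ++ d) X (x ++ padDec d.length m)
        (by simp [hlen, padDec_length])
        (hall (padDec d.length m) padDec_length)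
      constructor
      · choose σ hσsig hσfv hσX hσY using fun m => (hIH m).2
        obtain ⟨χ, hχsig, hχfv, hχsat⟩ := merge_sig hγ'0 σ hσsig
        refine packagePi (d := d) hlen hγ' hχsig ?_ ?_ ?_
        · rw [hχfv]
          exact Set.iUnion_subset fun m =>
            (hσfv m).trans (Set.Iio_subset_Iio (le_of_eq hydlen))
        · intro c hc
          refine (hχsat X (asn (x ++ c))).2 ⟨Encodable.encode c, ?_⟩
          have := hσX (Encodable.encode c)
          rwa [padDec_encode hc] at this
        · intro hs
          obtain ⟨m, hm⟩ := (hχsat Y (asn (y ++ d))).1 hs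
          exact hσY m hm
      · choose τ hτpi hτfv hτY hτX using fun m => (hIH m).1
        obtain ⟨θ, hθpi, hθfv, hθsat⟩ := merge_pi hγ'0 τ hτpi
        refine packageSig (d := d) hlen hγ' hθpi ?_ ?_ ?_
        · rw [hθfv]
          exact Set.iUnion_subset fun m =>
            (hτfv m).trans (Set.Iio_subset_Iio (le_of_eq hydlen))
        · exact (hθsat Y (asn (y ++ d))).2 fun m => hτY m
        · intro c hc hs
          have := (hθsat X (asn (x ++ c))).1 hs (Encodable.encode c)
          exact hτX (Encodable.encode c) (by rw [padDec_encode hc]; exact this)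

end Aux7

/-- Karp; Ash–Knight. For `α ≥ 1`, `(A,ā) ≤_α (B,b̄)` iff every
`Π^in_α` formula true of `ā` in `A` is true of `b̄` in `B`. -/
theorem bf_iff_pi_type {ar : ℕ → ℕ} (α : Ordinal) (hα : 1 ≤ α)
    (A B : Str ar) (a b : List ℕ) (hlen : a.length = b.length) :
    BFLe α A a B b ↔ PiTypeSub α A a B b := by
  constructor
  · intro h φ hφ hfv hsat
    exact (pos_main α A a B b h hlen).1 φ hφ (asn a) (asn b)
      (fun z hz => ⟨z, hfv hz, rfl, rfl⟩)
      (Or.inr (Ordinal.one_le_iff_ne_zero.1 hα)) hsat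
  · intro h
    by_contra hbf
    obtain ⟨⟨φ, hφ, hfv, hA, hB⟩, -⟩ := neg_main α A a B b hlen hbf
    exact hB (h φ hφ hfv hA)
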